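/- Two Dirac structures L₁, L₂ on V are gauge equivalent (i.e., L₂ = τ_B(L₁) for some skew-symmetric bilinear form B on V) if and only if ρ(L₁) = ρ(L₂) and the associated skew forms satisfy Ω_{L₁} = Ω_{L₂} + B|_{ρ(L₂)} for some skew-symmetric bilinear form B on V. -/

import Mathlib

open Module LinearMap

variable {V W U : Type*} [AddCommGroup V] [Module ℝ V] [FiniteDimensional ℝ V]
  [AddCommGroup W] [Module ℝ W] [FiniteDimensional ℝ W]
  [AddCommGroup U] [Module ℝ U] [FiniteDimensional ℝ U]

/-- The canonical symmetric pairing on `V ⊕ V*`. -/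
noncomputable def diracPairing (p q : V × Module.Dual ℝ V) : ℝ := (p.2 q.1 + q.2 p.1) / 2

/-- A subspace of `V ⊕ V*` is isotropic if the pairing vanishes on it. -/
def IsIsotropic (L : Submodule ℝ (V × Module.Dual ℝ V)) : Prop :=
  ∀ p ∈ L, ∀ q ∈ L, diracPairing p q = 0

/-- A Dirac structure: a maximally isotropic subspace. -/
def IsDirac (L : Submodule ℝ (V × Module.Dual ℝ V)) : Prop :=
  IsIsotropic L ∧ ∀ L' : Submodule ℝ (V × Module.Dual ℝ V), IsIsotropic L' → L ≤ L' → L' = L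

/-- The graph of a bivector `π : V* → V`. -/
def graphBiv (π : Module.Dual ℝ V →ₗ[ℝ] V) : Submodule ℝ (V × Module.Dual ℝ V) where
  carrier := {p | p.1 = π p.2}
  add_mem' := by
    intro a b ha hb
    simp only [Set.mem_setOf_eq, Prod.fst_add, Prod.snd_add, map_add] at *
    rw [ha, hb]
  zero_mem' := by simp
  smul_mem' := by
    intro c a ha
    simp only [Set.mem_setOf_eq, Prod.smul_fst, Prod.smul_snd, map_smul] at *
    rw [ha]

/-- Forward image of a Dirac structure along a linear map. -/
def Fwd (φ : V →ₗ[ℝ] W) (L : Submodule ℝ (V × Module.Dual ℝ V)) :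
    Submodule ℝ (W × Module.Dual ℝ W) where
  carrier := {q | ∃ x : V, q.1 = φ x ∧ (x, φ.dualMap q.2) ∈ L}
  add_mem' := by
    rintro a b ⟨x, hx, hxL⟩ ⟨y, hy, hyL⟩
    refine ⟨x + y, ?_, ?_⟩
    · simp [Prod.fst_add, hx, hy]
    · simpa [Prod.snd_add, Prod.mk_add_mk] using L.add_mem hxL hyL
  zero_mem' := ⟨0, by simp, by simp <;> exact L.zero_mem⟩
  smul_mem' := by
    rintro c a ⟨x, hx, hxL⟩
    refine ⟨c • x, ?_, ?_⟩
    · simp [Prod.smul_fst, hx]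
    · simpa [Prod.smul_snd, Prod.smul_mk] using L.smul_mem c hxL

/-- Backward image of a Dirac structure along a linear map. -/
def Bwd (φ : V →ₗ[ℝ] W) (L : Submodule ℝ (W × Module.Dual ℝ W)) :
    Submodule ℝ (V × Module.Dual ℝ V) where
  carrier := {p | ∃ η : Module.Dual ℝ W, p.2 = φ.dualMap η ∧ (φ p.1, η) ∈ L}
  add_mem' := by
    rintro a b ⟨x, hx, hxL⟩ ⟨y, hy, hyL⟩
    refine ⟨x + y, ?_, ?_⟩
    · simp [Prod.snd_add, hx, hy]
    · simpa [Prod.fst_add, Prod.mk_add_mk] using L.add_mem hxL hyL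
  zero_mem' := ⟨0, by simp, by simp <;> exact L.zero_mem⟩
  smul_mem' := by
    rintro c a ⟨x, hx, hxL⟩
    refine ⟨c • x, ?_, ?_⟩
    · simp [Prod.smul_snd, hx]
    · simpa [Prod.smul_fst, Prod.smul_mk] using L.smul_mem c hxL

/-- Gauge transformation of a Dirac structure by a 2-form `B : V → V*`. -/
def tau (B : V →ₗ[ℝ] Module.Dual ℝ V) (L : Submodule ℝ (V × Module.Dual ℝ V)) :
    Submodule ℝ (V × Module.Dual ℝ V) where
  carrier := {p | (p.1, p.2 - B p.1) ∈ L}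
  add_mem' := by
    intro a b ha hb
    have := L.add_mem ha hb
    simpa [Prod.mk_add_mk, Prod.fst_add, Prod.snd_add, map_add, add_sub_add_comm] using this
  zero_mem' := by simp <;> exact L.zero_mem
  smul_mem' := by
    intro c a ha
    have := L.smul_mem c ha
    simpa [Prod.smul_mk, Prod.smul_fst, Prod.smul_snd, smul_sub] using this

/-- Orthogonal of a subspace with respect to a bilinear form `Ω : V → V*`. -/
def orth (Ω : V →ₗ[ℝ] Module.Dual ℝ V) (S : Submodule ℝ V) : Submodule ℝ V where
  carrier := {x | ∀ y ∈ S, Ω x y = 0}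
  add_mem' := by
    intro a b ha hb y hy
    simp [map_add, ha y hy, hb y hy]
  zero_mem' := by simp
  smul_mem' := by
    intro c a ha y hy
    simp [ha y hy]

/-- Pullback of a 2-form along a linear map. -/
def pb (φ : V →ₗ[ℝ] W) (B : W →ₗ[ℝ] Module.Dual ℝ W) : V →ₗ[ℝ] Module.Dual ℝ V :=
  φ.dualMap ∘ₗ B ∘ₗ φ

/-- The Dirac structure associated to a pair `(R, Ω)` of a subspace and a skew form on it. -/
def diracOfForm (R : Submodule ℝ V) (Ω : R →ₗ[ℝ] Module.Dual ℝ R) :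
    Submodule ℝ (V × Module.Dual ℝ V) where
  carrier := {p | ∃ hx : p.1 ∈ R, ∀ y : R, p.2 y = Ω ⟨p.1, hx⟩ y}
  add_mem' := by
    rintro a b ⟨ha, Ha⟩ ⟨hb, Hb⟩
    refine ⟨R.add_mem ha hb, fun y => ?_⟩
    have h : (⟨(a + b).1, R.add_mem ha hb⟩ : R) = ⟨a.1, ha⟩ + ⟨b.1, hb⟩ := rfl
    rw [h, map_add]
    simp [Prod.snd_add, Ha y, Hb y]
  zero_mem' := by
    refine ⟨R.zero_mem, fun y => ?_⟩
    have h : (⟨((0 : V × Module.Dual ℝ V)).1, R.zero_mem⟩ : R) = 0 := rfl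
    rw [h, map_zero]
    rfl
  smul_mem' := by
    rintro c a ⟨ha, Ha⟩
    refine ⟨R.smul_mem c ha, fun y => ?_⟩
    have h : (⟨(c • a).1, R.smul_mem c ha⟩ : R) = c • ⟨a.1, ha⟩ := rfl
    rw [h, map_smul]
    simp [Prod.smul_snd, Ha y]

lemma mem_tau_iff (B : V →ₗ[ℝ] Module.Dual ℝ V) (L : Submodule ℝ (V × Module.Dual ℝ V))
    (p : V × Module.Dual ℝ V) : p ∈ tau B L ↔ (p.1, p.2 - B p.1) ∈ L := Iff.rfl

/-- If `ξ` vanishes on the projection of a Dirac structure `L`, then `(0, ξ) ∈ L`. -/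
lemma zero_pair_mem (L : Submodule ℝ (V × Module.Dual ℝ V)) (h : IsDirac L)
    (ξ : Module.Dual ℝ V)
    (hξ : ∀ y ∈ Submodule.map (LinearMap.fst ℝ V (Module.Dual ℝ V)) L, ξ y = 0) :
    ((0 : V), ξ) ∈ L := by
  set L' := L ⊔ (Submodule.span ℝ {((0 : V), ξ)}) with hL'
  have hvan : ∀ q ∈ L', ξ q.1 = 0 ∧ q.2 0 = 0 := by
    intro q hq
    rcases Submodule.mem_sup.mp hq with ⟨a, ha, b, hb, rfl⟩
    rcases Submodule.mem_span_singleton.mp hb with ⟨r, rfl⟩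
    have h1 : ξ a.1 = 0 := hξ a.1 ⟨a, ha, rfl⟩
    constructor
    · simp [Prod.fst_add, h1]
    · simp [Prod.snd_add, map_zero]
  have hiso : IsIsotropic L' := by
    intro p hp q hq
    rcases Submodule.mem_sup.mp hp with ⟨a, ha, b, hb, rfl⟩
    rcases Submodule.mem_sup.mp hq with ⟨c, hc, d, hd, rfl⟩
    rcases Submodule.mem_span_singleton.mp hb with ⟨r, rfl⟩
    rcases Submodule.mem_span_singleton.mp hd with ⟨s, rfl⟩
    have h0 : diracPairing a c = 0 := h.1 a ha c hc
    have h1 : ξ a.1 = 0 := hξ a.1 ⟨a, ha, rfl⟩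
    have h2 : ξ c.1 = 0 := hξ c.1 ⟨c, hc, rfl⟩
    unfold diracPairing at *
    simp only [Prod.fst_add, Prod.snd_add, Prod.smul_fst, Prod.smul_snd, smul_zero, add_zero,
      map_add, map_smul, LinearMap.add_apply, LinearMap.smul_apply, map_zero, smul_eq_mul,
      h1, h2, mul_zero] at *
    linarith
  have hEq : L' = L := h.2 L' hiso le_sup_left
  have : ((0 : V), ξ) ∈ L' :=
    Submodule.mem_sup_right (Submodule.mem_span_singleton_self _)
  rwa [hEq] at this

/-- Isotropy implies the fiber-form relation. -/
lemma iso_apply (L : Submodule ℝ (V × Module.Dual ℝ V)) (h : IsIsotropic L)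
    {x y : V} {η ζ : Module.Dual ℝ V} (hx : (x, η) ∈ L) (hy : (y, ζ) ∈ L) :
    η y + ζ x = 0 := by
  have := h _ hx _ hy
  unfold diracPairing at this
  simp only at this
  linarith

/-- Two Dirac structures are gauge equivalent iff they have the same range in
`V` and their skew forms differ by the restriction of a global skew form. -/
theorem stmt_13 (L₁ L₂ : Submodule ℝ (V × Module.Dual ℝ V))
    (h₁ : IsDirac L₁) (h₂ : IsDirac L₂) :
    (∃ B : V →ₗ[ℝ] Module.Dual ℝ V, (∀ x y : V, B x y = - B y x) ∧ L₂ = tau B L₁) ↔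
    (Submodule.map (LinearMap.fst ℝ V (Module.Dual ℝ V)) L₁ =
        Submodule.map (LinearMap.fst ℝ V (Module.Dual ℝ V)) L₂ ∧
      ∃ B : V →ₗ[ℝ] Module.Dual ℝ V, (∀ x y : V, B x y = - B y x) ∧
        ∀ (x : V) (η₁ η₂ : Module.Dual ℝ V), (x, η₁) ∈ L₁ → (x, η₂) ∈ L₂ →
          ∀ y ∈ Submodule.map (LinearMap.fst ℝ V (Module.Dual ℝ V)) L₂,
            η₁ y = η₂ y + B x y) := by
  constructor
  · rintro ⟨B, hB, rfl⟩
    have hproj : Submodule.map (LinearMap.fst ℝ V (Module.Dual ℝ V)) L₁ =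
        Submodule.map (LinearMap.fst ℝ V (Module.Dual ℝ V)) (tau B L₁) := by
      apply le_antisymm
      · rintro x ⟨p, hp, rfl⟩
        refine ⟨(p.1, p.2 + B p.1), ?_, rfl⟩
        have : (p.1, p.2 + B p.1) ∈ tau B L₁ := by
          rw [mem_tau_iff]; simpa using hp
        exact this
      · rintro x ⟨p, hp, rfl⟩
        have hp' : p ∈ tau B L₁ := hp
        rw [mem_tau_iff] at hp'
        exact ⟨(p.1, p.2 - B p.1), hp', rfl⟩
    refine ⟨hproj, -B, fun x y => by simp [hB x y], ?_⟩
    intro x η₁ η₂ h1 h2 y hy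
    rw [mem_tau_iff] at h2
    simp only at h2
    have hmem : ((0 : V), η₁ - (η₂ - B x)) ∈ L₁ := by
      have := L₁.sub_mem h1 h2
      simpa [Prod.mk_sub_mk] using this
    have hy' : y ∈ Submodule.map (LinearMap.fst ℝ V (Module.Dual ℝ V)) L₁ := by
      rw [hproj]; exact hy
    rcases hy' with ⟨q, hq, rfl⟩
    have hvan : (η₁ - (η₂ - B x)) q.1 + q.2 0 = 0 := by
      have := iso_apply L₁ h₁.1 hmem (show (q.1, q.2) ∈ L₁ from hq)
      exact this
    simp only [LinearMap.sub_apply, map_zero] at hvan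
    simp only [LinearMap.neg_apply, LinearMap.fst_apply]
    linarith
  · rintro ⟨hρ, B, hB, hcomp⟩
    refine ⟨-B, fun x y => by simp [hB x y], ?_⟩
    have hiso : IsIsotropic (tau (-B) L₁) := by
      intro p hp q hq
      rw [mem_tau_iff] at hp hq
      have h0 := iso_apply L₁ h₁.1 hp hq
      have hskew := hB p.1 q.1
      simp only [LinearMap.sub_apply, LinearMap.neg_apply, sub_neg_eq_add,
        LinearMap.add_apply] at h0
      unfold diracPairing
      linarith
    have hle : L₂ ≤ tau (-B) L₁ := by
      rintro ⟨x, η₂⟩ hp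
      have hx : x ∈ Submodule.map (LinearMap.fst ℝ V (Module.Dual ℝ V)) L₁ := by
        rw [hρ]; exact ⟨(x, η₂), hp, rfl⟩
      rcases hx with ⟨q, hq, rfl⟩
      simp only [LinearMap.fst_apply] at hp ⊢
      have hq' : (q.1, q.2) ∈ L₁ := hq
      have hc := hcomp q.1 q.2 η₂ hq' hp
      have hξ : ∀ y ∈ Submodule.map (LinearMap.fst ℝ V (Module.Dual ℝ V)) L₁,
          (η₂ + B q.1 - q.2) y = 0 := by
        intro y hy
        have hy2 : y ∈ Submodule.map (LinearMap.fst ℝ V (Module.Dual ℝ V)) L₂ := by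
          rw [← hρ]; exact hy
        have := hc y hy2
        simp only [LinearMap.sub_apply, LinearMap.add_apply]
        linarith
      have hmem := zero_pair_mem L₁ h₁ _ hξ
      have hsum := L₁.add_mem hq' hmem
      rw [mem_tau_iff]
      simp only [LinearMap.neg_apply, sub_neg_eq_add]
      have heq : (q.1, η₂ + B q.1) = ((q.1, q.2) + ((0 : V), η₂ + B q.1 - q.2) :
          V × Module.Dual ℝ V) := by
        ext <;> simp
      rw [heq]
      exact hsum
    have := h₂.2 (tau (-B) L₁) hiso hle
    exact this.symm
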